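/- With schools sorted by competitiveness ratios γ_c/q_c, the vector p̂ = [A^{−1}(q − γ/Γ)]^+ (entrywise positive part) is the unique equilibrium of the single-score MNL market: it satisfies A p̂ + γ/Γ ≤ q componentwise, and (A p̂ + γ/Γ)_c = q_c whenever p̂_c > 0. -/

import Mathlib

open Finset

/-- The upper triangular demand matrix `A`. -/
noncomputable def Amat {n : ℕ} (γ : Fin n → ℝ) : Matrix (Fin n) (Fin n) ℝ :=
  Matrix.of fun i j =>
    if i = j then -γ i / ∑ k ∈ Iic i, γ k
    else if i < j then γ i * (1 / ∑ k ∈ Iio j, γ k - 1 / ∑ k ∈ Iic j, γ k)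
    else 0

/-- The explicit inverse `A⁻¹`. -/
noncomputable def Bmat {n : ℕ} (γ : Fin n → ℝ) : Matrix (Fin n) (Fin n) ℝ :=
  Matrix.of fun i j =>
    if i = j then -(∑ k ∈ Iic i, γ k) / γ i
    else if i < j then -1
    else 0

namespace MNLAux

variable {n : ℕ} {γ q : Fin n → ℝ}

lemma mulVec_apply (M : Matrix (Fin n) (Fin n) ℝ) (x : Fin n → ℝ) (c : Fin n) :
    M.mulVec x c = ∑ j, M c j * x j := by
  simp [Matrix.mulVec, dotProduct]

lemma A_diag (γ : Fin n → ℝ) (i : Fin n) : Amat γ i i = -γ i / ∑ k ∈ Iic i, γ k := by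
  simp [Amat]

lemma A_lt {i j : Fin n} (h : i < j) :
    Amat γ i j = γ i * (1 / ∑ k ∈ Iio j, γ k - 1 / ∑ k ∈ Iic j, γ k) := by
  simp [Amat, h, ne_of_lt h]

lemma A_gt {i j : Fin n} (h : j < i) : Amat γ i j = 0 := by
  simp [Amat, ne_of_gt h, asymm h]

lemma B_diag (γ : Fin n → ℝ) (i : Fin n) : Bmat γ i i = -(∑ k ∈ Iic i, γ k) / γ i := by
  simp [Bmat]

lemma B_lt {i j : Fin n} (h : i < j) : Bmat γ i j = -1 := by
  simp [Bmat, h, ne_of_lt h]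

lemma B_gt {i j : Fin n} (h : j < i) : Bmat γ i j = 0 := by
  simp [Bmat, ne_of_gt h, asymm h]

lemma S_pos (hγ : ∀ i, 0 < γ i) (c : Fin n) : 0 < ∑ k ∈ Iic c, γ k :=
  Finset.sum_pos (fun k _ => hγ k) ⟨c, mem_Iic.2 le_rfl⟩

lemma SIio_pos (hγ : ∀ i, 0 < γ i) {c j : Fin n} (h : c < j) : 0 < ∑ k ∈ Iio j, γ k :=
  Finset.sum_pos (fun k _ => hγ k) ⟨c, mem_Iio.2 h⟩

lemma S_split (γ : Fin n → ℝ) (j : Fin n) :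
    ∑ k ∈ Iic j, γ k = γ j + ∑ k ∈ Iio j, γ k := by
  rw [← Finset.Iio_insert j, Finset.sum_insert (by simp)]

lemma BA_one (hγ : ∀ i, 0 < γ i) : Bmat γ * Amat γ = 1 := by
  ext i j
  rw [Matrix.mul_apply]
  rcases lt_trichotomy i j with hij | rfl | hij
  · -- i < j : entry 0
    have hSio := SIio_pos hγ hij
    have hSj := S_pos hγ j
    have h1 : ∑ k, Bmat γ i k * Amat γ k j = ∑ k ∈ Icc i j, Bmat γ i k * Amat γ k j := by
      refine (Finset.sum_subset (Finset.subset_univ _) ?_).symm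
      intro k _ hk
      rw [mem_Icc, not_and_or] at hk
      rcases hk with hk | hk
      · rw [B_gt (lt_of_not_ge hk), zero_mul]
      · rw [A_gt (lt_of_not_ge hk), mul_zero]
    have hsplit : (∑ k ∈ Iic i, γ k) + ∑ k ∈ Ioo i j, γ k = ∑ k ∈ Iio j, γ k := by
      rw [← Finset.sum_union (Finset.disjoint_left.mpr
        (fun k hk hk' => absurd (mem_Ioo.1 hk').1 (not_lt.2 (mem_Iic.1 hk))))]
      congr 1
      ext k
      simp only [mem_union, mem_Iic, mem_Ioo, mem_Iio]
      constructor
      · rintro (h | ⟨_, h⟩)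
        · exact lt_of_le_of_lt h hij
        · exact h
      · intro h
        rcases le_or_gt k i with h' | h'
        · exact Or.inl h'
        · exact Or.inr ⟨h', h⟩
    have hIoo : ∑ k ∈ Ioo i j, Bmat γ i k * Amat γ k j
        = -((∑ k ∈ Ioo i j, γ k) * (1 / ∑ k ∈ Iio j, γ k - 1 / ∑ k ∈ Iic j, γ k)) := by
      have hterm : ∀ k ∈ Ioo i j, Bmat γ i k * Amat γ k j
          = -(γ k * (1 / ∑ k ∈ Iio j, γ k - 1 / ∑ k ∈ Iic j, γ k)) := by
        intro k hk
        rw [mem_Ioo] at hk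
        rw [B_lt hk.1, A_lt hk.2]
        ring
      rw [Finset.sum_congr rfl hterm, Finset.sum_neg_distrib, ← Finset.sum_mul]
    rw [h1, ← Finset.Ioc_insert_left hij.le, Finset.sum_insert (by simp),
        ← Finset.Ioo_insert_right hij, Finset.sum_insert (by simp), hIoo,
        B_diag, A_lt hij, B_lt hij, A_diag, Matrix.one_apply_ne (ne_of_lt hij)]
    have hX : ∑ k ∈ Ioo i j, γ k = (∑ k ∈ Iio j, γ k) - ∑ k ∈ Iic i, γ k := by
      linarith
    rw [hX, S_split γ j]
    have h2 := (hγ i).ne'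
    have h3 := hSio.ne'
    have h4 : γ j + ∑ k ∈ Iio j, γ k ≠ 0 := by
      have := hγ j
      intro hcon
      linarith
    field_simp
    ring
  · -- diagonal
    rw [Finset.sum_eq_single i]
    · rw [B_diag, A_diag, Matrix.one_apply_eq]
      have h1 := (hγ i).ne'
      have h2 := (S_pos hγ i).ne'
      field_simp
    · intro k _ hk
      rcases lt_or_gt_of_ne hk with h | h
      · rw [B_gt h, zero_mul]
      · rw [A_gt h, mul_zero]
    · intro h
      exact absurd (mem_univ i) h
  · -- j < i : 0
    rw [Matrix.one_apply_ne (ne_of_gt hij)]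
    apply Finset.sum_eq_zero
    intro k _
    rcases lt_or_ge k i with h | h
    · rw [B_gt h, zero_mul]
    · rw [A_gt (lt_of_lt_of_le hij h), mul_zero]

lemma AB_one (hγ : ∀ i, 0 < γ i) : Amat γ * Bmat γ = 1 :=
  mul_eq_one_comm.mpr (BA_one hγ)

lemma f_eq (hγ : ∀ i, 0 < γ i) (c : Fin n) :
    (Bmat γ).mulVec (fun c => q c - γ c / ∑ i, γ i) c
      = 1 - (∑ k ∈ Iic c, γ k) * q c / γ c - ∑ j ∈ Ioi c, q j := by
  have hΓ : 0 < ∑ i, γ i := Finset.sum_pos (fun k _ => hγ k) ⟨c, mem_univ c⟩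
  have hcompl : (Iic c)ᶜ = Ioi c := by
    ext k
    simp [not_le]
  rw [mulVec_apply]
  rw [← Finset.sum_add_sum_compl (Iic c) (fun j => Bmat γ c j * (q j - γ j / ∑ i, γ i)), hcompl]
  have h1 : ∑ j ∈ Iic c, Bmat γ c j * (q j - γ j / ∑ i, γ i)
      = (-(∑ k ∈ Iic c, γ k) / γ c) * (q c - γ c / ∑ i, γ i) := by
    rw [Finset.sum_eq_single_of_mem c (mem_Iic.2 le_rfl)]
    · rw [B_diag]
    · intro k hk hkc
      rw [B_gt (lt_of_le_of_ne (mem_Iic.1 hk) hkc), zero_mul]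
  have h2 : ∑ j ∈ Ioi c, Bmat γ c j * (q j - γ j / ∑ i, γ i)
      = (∑ j ∈ Ioi c, γ j) / (∑ i, γ i) - ∑ j ∈ Ioi c, q j := by
    rw [Finset.sum_div, ← Finset.sum_sub_distrib]
    refine Finset.sum_congr rfl fun j hj => ?_
    rw [B_lt (mem_Ioi.1 hj)]
    ring
  have h3 : ∑ j ∈ Ioi c, γ j = (∑ i, γ i) - ∑ k ∈ Iic c, γ k := by
    have := Finset.sum_add_sum_compl (Iic c) γ
    rw [hcompl] at this
    linarith
  rw [h1, h2, h3]
  have h4 := (hγ c).ne'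
  have h5 := hΓ.ne'
  field_simp
  ring

lemma ratio_key (hq : ∀ i, 0 < q i)
    (hratio : ∀ i j : Fin n, i ≤ j → γ i / q i ≤ γ j / q j)
    {a b : Fin n} (hab : a ≤ b) : γ a * q b ≤ γ b * q a :=
  (div_le_div_iff₀ (hq a) (hq b)).1 (hratio a b hab)

lemma f_mono (hγ : ∀ i, 0 < γ i) (hq : ∀ i, 0 < q i)
    (hratio : ∀ i j : Fin n, i ≤ j → γ i / q i ≤ γ j / q j) :
    Monotone fun c : Fin n => 1 - (∑ k ∈ Iic c, γ k) * q c / γ c - ∑ j ∈ Ioi c, q j := by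
  intro c d hcd
  simp only
  have hdisj1 : Disjoint (Ioc c d) (Ioi d) :=
    Finset.disjoint_left.mpr fun k hk hk' => absurd (mem_Ioi.1 hk') (not_lt.2 (mem_Ioc.1 hk).2)
  have hdisj2 : Disjoint (Iic c) (Ioc c d) :=
    Finset.disjoint_left.mpr fun k hk hk' => absurd (mem_Ioc.1 hk').1 (not_lt.2 (mem_Iic.1 hk))
  have hu1 : Ioc c d ∪ Ioi d = Ioi c := by
    ext k
    simp only [mem_union, mem_Ioc, mem_Ioi]
    constructor
    · rintro (⟨h, _⟩ | h)
      · exact h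
      · exact lt_of_le_of_lt hcd h
    · intro h
      rcases le_or_gt k d with h' | h'
      · exact Or.inl ⟨h, h'⟩
      · exact Or.inr h'
  have hu2 : Iic c ∪ Ioc c d = Iic d := by
    ext k
    simp only [mem_union, mem_Iic, mem_Ioc]
    constructor
    · rintro (h | ⟨_, h⟩)
      · exact le_trans h hcd
      · exact h
    · intro h
      rcases le_or_gt k c with h' | h'
      · exact Or.inl h'
      · exact Or.inr ⟨h', h⟩
  have hsum1 : ∑ j ∈ Ioi c, q j = (∑ j ∈ Ioc c d, q j) + ∑ j ∈ Ioi d, q j := by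
    rw [← Finset.sum_union hdisj1, hu1]
  have hsum2 : ∑ k ∈ Iic d, γ k = (∑ k ∈ Iic c, γ k) + ∑ k ∈ Ioc c d, γ k := by
    rw [← Finset.sum_union hdisj2, hu2]
  have hr : q d / γ d ≤ q c / γ c := by
    rw [div_le_div_iff₀ (hγ d) (hγ c)]
    have := ratio_key hq hratio hcd
    linarith
  have hb1 : (∑ k ∈ Iic c, γ k) * (q d / γ d) ≤ (∑ k ∈ Iic c, γ k) * (q c / γ c) :=
    mul_le_mul_of_nonneg_left hr (le_of_lt (S_pos hγ c))
  have hb2 : (∑ k ∈ Ioc c d, γ k) * (q d / γ d) ≤ ∑ j ∈ Ioc c d, q j := by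
    rw [Finset.sum_mul]
    refine Finset.sum_le_sum fun j hj => ?_
    have hjd : j ≤ d := (mem_Ioc.1 hj).2
    rw [← mul_div_assoc, div_le_iff₀ (hγ d)]
    have := ratio_key hq hratio hjd
    linarith
  have he1 : (∑ k ∈ Iic c, γ k) * q c / γ c = (∑ k ∈ Iic c, γ k) * (q c / γ c) := by
    ring
  have he2 : (∑ k ∈ Iic d, γ k) * q d / γ d = (∑ k ∈ Iic d, γ k) * (q d / γ d) := by
    ring
  rw [he1, he2, hsum1, hsum2]
  nlinarith [hb1, hb2]

lemma B_mulVec_congr (x y : Fin n → ℝ) (c : Fin n) (h : ∀ j, c ≤ j → x j = y j) :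
    (Bmat γ).mulVec x c = (Bmat γ).mulVec y c := by
  rw [mulVec_apply, mulVec_apply]
  refine Finset.sum_congr rfl fun j _ => ?_
  rcases le_or_gt c j with hj | hj
  · rw [h j hj]
  · rw [B_gt hj, zero_mul, zero_mul]

lemma A_mulVec_diff (x y : Fin n → ℝ) (c : Fin n) (h : ∀ j, c < j → x j = y j) :
    (Amat γ).mulVec x c - (Amat γ).mulVec y c
      = (-γ c / ∑ k ∈ Iic c, γ k) * (x c - y c) := by
  rw [mulVec_apply, mulVec_apply, ← Finset.sum_sub_distrib, Finset.sum_eq_single c]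
  · rw [A_diag]
    ring
  · intro j _ hj
    rcases lt_or_gt_of_ne hj with hlt | hgt
    · rw [A_gt hlt]
      ring
    · rw [h j hgt]
      ring
  · intro h'
    exact absurd (mem_univ c) h'

lemma A_mulVec_ratio (x : Fin n → ℝ) {c d : Fin n} (hcd : c ≤ d)
    (hx : ∀ j, j ≤ d → x j = 0) :
    γ d * (Amat γ).mulVec x c = γ c * (Amat γ).mulVec x d := by
  have key : ∀ e : Fin n, e ≤ d → (Amat γ).mulVec x e
      = γ e * ∑ j ∈ Ioi d, (1 / ∑ k ∈ Iio j, γ k - 1 / ∑ k ∈ Iic j, γ k) * x j := by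
    intro e he
    rw [mulVec_apply, Finset.mul_sum]
    refine ((Finset.sum_subset (subset_univ _) fun j _ hj => by
      rw [hx j (not_lt.1 fun h => hj (mem_Ioi.2 h)), mul_zero]).symm.trans ?_)
    refine Finset.sum_congr rfl fun j hj => ?_
    rw [A_lt (lt_of_le_of_lt he (mem_Ioi.1 hj))]
    ring
  rw [key c hcd, key d le_rfl]
  ring


end MNLAux

/-- With schools sorted by competitiveness ratios, `p̂ = [A⁻¹(q - γ/Γ)]⁺` is the
unique equilibrium of the single-score MNL market: demand `A p̂ + γ/Γ` is at
most `q` componentwise, with equality wherever `p̂_c > 0`; and it is the unique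
such nonnegative sorted cutoff vector. -/
theorem mnl_equilibrium {n : ℕ} (γ q : Fin n → ℝ)
    (hγ : ∀ i, 0 < γ i) (hq : ∀ i, 0 < q i)
    (hratio : ∀ i j : Fin n, i ≤ j → γ i / q i ≤ γ j / q j) :
    letI Γ : ℝ := ∑ i, γ i
    letI phat : Fin n → ℝ :=
      fun c => max 0 (((Bmat γ).mulVec fun c => q c - γ c / Γ) c)
    (∀ c, (Amat γ).mulVec phat c + γ c / Γ ≤ q c) ∧
    (∀ c, 0 < phat c → (Amat γ).mulVec phat c + γ c / Γ = q c) ∧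
    (∀ p' : Fin n → ℝ, (∀ c, 0 ≤ p' c) → Monotone p' →
      (∀ c, (Amat γ).mulVec p' c + γ c / Γ ≤ q c) →
      (∀ c, 0 < p' c → (Amat γ).mulVec p' c + γ c / Γ = q c) →
      p' = phat) := by
  set Γ : ℝ := ∑ i, γ i with hΓdef
  set f : Fin n → ℝ := (Bmat γ).mulVec fun c => q c - γ c / Γ with hfdef
  set phat : Fin n → ℝ := fun c => max 0 (f c) with hphat
  have hΓpos : ∀ _c : Fin n, 0 < Γ :=
    fun c => Finset.sum_pos (fun k _ => hγ k) ⟨c, mem_univ c⟩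
  have hBA := MNLAux.BA_one (γ := γ) hγ
  have hAB := MNLAux.AB_one (γ := γ) hγ
  have hAf : ∀ c, (Amat γ).mulVec f c = q c - γ c / Γ := by
    intro c
    rw [hfdef, Matrix.mulVec_mulVec, hAB, Matrix.one_mulVec]
  have hfe : ∀ c, f c = 1 - (∑ k ∈ Iic c, γ k) * q c / γ c - ∑ j ∈ Ioi c, q j :=
    fun c => MNLAux.f_eq hγ c
  have hfm : Monotone f := by
    intro a b hab
    rw [hfe a, hfe b]
    exact MNLAux.f_mono hγ hq hratio hab
  -- equality whenever f c > 0
  have heq : ∀ c, 0 < f c → (Amat γ).mulVec phat c = q c - γ c / Γ := by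
    intro c hc
    have hd : (Amat γ).mulVec phat c - (Amat γ).mulVec f c
        = (-γ c / ∑ k ∈ Iic c, γ k) * (phat c - f c) :=
      MNLAux.A_mulVec_diff phat f c (fun j hj => by
        have hfj : 0 < f j := lt_of_lt_of_le hc (hfm hj.le)
        show max 0 (f j) = f j
        exact max_eq_right hfj.le)
    have hpc : phat c = f c := max_eq_right hc.le
    rw [hpc] at hd
    have := hAf c
    simp only [sub_self, mul_zero] at hd
    linarith
  refine ⟨?_, ?_, ?_⟩
  · -- part 1: demand ≤ capacity
    intro c
    by_cases hc : 0 < f c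
    · linarith [heq c hc]
    · push_neg at hc
      by_cases hex : ∃ j, 0 < f j
      · obtain ⟨j0, hj0⟩ := hex
        have hsne : (univ.filter fun j => 0 < f j).Nonempty := ⟨j0, by simp [hj0]⟩
        set m := (univ.filter fun j => 0 < f j).min' hsne with hm
        have hmpos : 0 < f m := by
          have := (univ.filter fun j => 0 < f j).min'_mem hsne
          simpa using this
        have hmle : ∀ j, 0 < f j → m ≤ j :=
          fun j hj => (univ.filter fun j => 0 < f j).min'_le j (by simp [hj])
        have hcm : c < m := by
          by_contra h
          push_neg at h
          exact absurd (lt_of_lt_of_le hmpos (hfm h)) (not_lt.2 hc)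
        have hcm' : (c : ℕ) < (m : ℕ) := hcm
        set d : Fin n := ⟨(m : ℕ) - 1, by omega⟩ with hd
        have hcd : c ≤ d := by
          rw [Fin.le_def]
          simp only [hd]
          omega
        have hdm : (d : ℕ) < (m : ℕ) := by
          simp only [hd]
          omega
        have hfd : f d ≤ 0 := by
          by_contra h
          push_neg at h
          have := hmle d h
          rw [Fin.le_def] at this
          omega
        have hzero : ∀ j, j ≤ d → phat j = 0 := by
          intro j hj
          have : f j ≤ 0 := le_trans (hfm hj) hfd
          exact max_eq_left this
        have hpos : ∀ j, d < j → phat j = f j := by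
          intro j hj
          have hmj : m ≤ j := by
            rw [Fin.le_def]
            rw [Fin.lt_def] at hj
            simp only [hd] at hj
            omega
          exact max_eq_right (le_of_lt (lt_of_lt_of_le hmpos (hfm hmj)))
        have hSd := MNLAux.S_pos hγ d
        have hAd : (Amat γ).mulVec phat d ≤ q d - γ d / Γ := by
          have h1 : (Amat γ).mulVec phat d - (Amat γ).mulVec f d
              = (-γ d / ∑ k ∈ Iic d, γ k) * (phat d - f d) :=
            MNLAux.A_mulVec_diff phat f d hpos
          rw [hzero d le_rfl] at h1
          have h2 : 0 ≤ (γ d / ∑ k ∈ Iic d, γ k) * (0 - f d) :=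
            mul_nonneg (le_of_lt (div_pos (hγ d) hSd)) (by linarith)
          have h3 : (-γ d / ∑ k ∈ Iic d, γ k) * (0 - f d)
              = -((γ d / ∑ k ∈ Iic d, γ k) * (0 - f d)) := by ring
          have := hAf d
          rw [h3] at h1
          linarith
        have hr := MNLAux.A_mulVec_ratio (γ := γ) phat hcd hzero
        have hqr : γ c * q d ≤ γ d * q c := MNLAux.ratio_key hq hratio hcd
        have h3 : γ d * ((Amat γ).mulVec phat c) ≤ γ c * q d - γ c * γ d / Γ := by
          rw [hr]
          have := mul_le_mul_of_nonneg_left hAd (le_of_lt (hγ c))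
          have hexp : γ c * (q d - γ d / Γ) = γ c * q d - γ c * γ d / Γ := by ring
          linarith
        have hexpand : γ d * ((Amat γ).mulVec phat c + γ c / Γ)
            = γ d * ((Amat γ).mulVec phat c) + γ c * γ d / Γ := by ring
        have h4 : γ d * ((Amat γ).mulVec phat c + γ c / Γ) ≤ γ d * q c := by
          rw [hexpand]
          linarith
        exact le_of_mul_le_mul_left h4 (hγ d)
      · push_neg at hex
        have hp0 : phat = (0 : Fin n → ℝ) := funext fun j => max_eq_left (hex j)
        rw [hp0, Matrix.mulVec_zero]
        have hn : 0 < n := c.pos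
        set t : Fin n := ⟨n - 1, by omega⟩ with ht
        have hct : c ≤ t := by
          rw [Fin.le_def]
          have := c.isLt
          simp only [ht]
          omega
        have htv : (t : ℕ) = n - 1 := rfl
        have hft := hex t
        rw [hfe t] at hft
        have hIoi : Ioi t = (∅ : Finset (Fin n)) := by
          ext j
          simp only [mem_Ioi, notMem_empty, iff_false, not_lt, Fin.le_def]
          have := j.isLt
          omega
        have hIic : Iic t = (univ : Finset (Fin n)) := by
          ext j
          simp only [mem_Iic, mem_univ, iff_true, Fin.le_def]
          have := j.isLt
          omega
        rw [hIoi, hIic, Finset.sum_empty] at hft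
        -- hft : 1 - Γ * q t / γ t - 0 ≤ 0
        have hγt := hγ t
        have hΓeq : ∑ k : Fin n, γ k = Γ := rfl
        rw [hΓeq] at hft
        have h1 : γ t ≤ Γ * q t := by
          have h2 : 1 ≤ Γ * q t / γ t := by linarith
          calc γ t = 1 * γ t := by ring
            _ ≤ (Γ * q t / γ t) * γ t := by nlinarith
            _ = Γ * q t := by field_simp
        have hqr : γ c * q t ≤ γ t * q c := MNLAux.ratio_key hq hratio hct
        have hΓp := hΓpos c
        have hgoal : γ c ≤ q c * Γ := by
          have ha : γ c * γ t ≤ γ c * (Γ * q t) := by nlinarith [hγ c]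
          have hb : Γ * (γ c * q t) ≤ Γ * (γ t * q c) := by nlinarith
          nlinarith
        simp only [Pi.zero_apply]
        rw [zero_add, div_le_iff₀ hΓp]
        exact hgoal
  · -- part 2: equality on support
    intro c hc
    have hfc : 0 < f c := by
      by_contra h
      push_neg at h
      have : phat c = 0 := max_eq_left h
      rw [this] at hc
      exact lt_irrefl 0 hc
    linarith [heq c hfc]
  · -- part 3: uniqueness
    intro p' hp0 hpm hle hpe
    have key1 : ∀ c, 0 < p' c → p' c = f c := by
      intro c hc
      have h1 : p' c = (Bmat γ).mulVec ((Amat γ).mulVec p') c := by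
        rw [Matrix.mulVec_mulVec, hBA, Matrix.one_mulVec]
      rw [h1, MNLAux.B_mulVec_congr ((Amat γ).mulVec p') (fun j => q j - γ j / Γ) c
        (fun j hj => by
          have := hpe j (lt_of_lt_of_le hc (hpm hj))
          linarith)]
    have key2 : ∀ c, 0 < f c → 0 < p' c := by
      intro c hc
      by_contra h
      push_neg at h
      have hpc : p' c = 0 := le_antisymm h (hp0 c)
      have hZne : (univ.filter fun j => p' j = 0).Nonempty := ⟨c, by simp [hpc]⟩
      set d := (univ.filter fun j => p' j = 0).max' hZne with hd
      have hdz : p' d = 0 := by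
        have := (univ.filter fun j => p' j = 0).max'_mem hZne
        simpa using this
      have hcd : c ≤ d := (univ.filter fun j => p' j = 0).le_max' c (by simp [hpc])
      have hfd : 0 < f d := lt_of_lt_of_le hc (hfm hcd)
      have hpj : ∀ j, d < j → p' j = f j := by
        intro j hj
        have hpjpos : 0 < p' j := by
          rcases (hp0 j).lt_or_eq with h' | h'
          · exact h'
          · exact absurd ((univ.filter fun j => p' j = 0).le_max' j (by simp [h'.symm]))
              (not_le.2 hj)
        exact key1 j hpjpos
      have hdiff : (Amat γ).mulVec p' d - (Amat γ).mulVec f d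
          = (-γ d / ∑ k ∈ Iic d, γ k) * (p' d - f d) :=
        MNLAux.A_mulVec_diff p' f d hpj
      have hSd := MNLAux.S_pos hγ d
      have hApd := hAf d
      have hld := hle d
      rw [hdz] at hdiff
      have hpos : 0 < (-γ d / ∑ k ∈ Iic d, γ k) * (0 - f d) := by
        have h1 : (γ d / ∑ k ∈ Iic d, γ k) * (0 - f d) < 0 :=
          mul_neg_of_pos_of_neg (div_pos (hγ d) hSd) (by linarith)
        have h2 : (-γ d / ∑ k ∈ Iic d, γ k) * (0 - f d)
            = -((γ d / ∑ k ∈ Iic d, γ k) * (0 - f d)) := by ring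
        linarith [h2 ▸ neg_pos.2 h1]
      linarith
    funext c
    rcases (hp0 c).lt_or_eq with h | h
    · have h1 := key1 c h
      have h2 : phat c = f c := max_eq_right (h1 ▸ h.le)
      rw [h1, h2]
    · have hfc : f c ≤ 0 := by
        by_contra hf'
        push_neg at hf'
        have := key2 c hf'
        rw [← h] at this
        exact lt_irrefl 0 this
      have h2 : phat c = 0 := max_eq_left hfc
      rw [← h, h2]
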